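/- arXiv:1409.6254 — 3 statements merged into one kernel-verified Lean document; each statement's English description precedes it below -/
import Mathlib

section
/- Let R be a commutative Noetherian ring. The assignment Z ↦ T_Z, where T_Z = {M ∈ R-Mod : Supp(M) ⊆ Z}, is a bijection between the specialization-closed subsets of Spec(R) and the hereditary torsion classes in R-Mod. Its inverse takes a hereditary torsion class T to the set of primes p such that R/p ∈ T. -/
open CategoryTheory DirectSum

universe u

variable (R : Type u) [CommRing R]

/-- A hereditary torsion class in `R-Mod`: a class of modules closed under submodules,
quotients, extensions and arbitrary direct sums. -/
structure HereditaryTorsionClass where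
  /-- the class of torsion modules -/
  P : ModuleCat.{u} R → Prop
  subobj : ∀ (M N : ModuleCat.{u} R) (f : N ⟶ M), Function.Injective f → P M → P N
  quot : ∀ (M N : ModuleCat.{u} R) (f : M ⟶ N), Function.Surjective f → P M → P N
  ext : ∀ (M N Q : ModuleCat.{u} R) (f : N ⟶ M) (g : M ⟶ Q), Function.Injective f →
    Function.Surjective g → LinearMap.range f.hom = LinearMap.ker g.hom → P N → P Q → P M
  sums : ∀ (ι : Type u) (M : ι → ModuleCat.{u} R), (∀ i, P (M i)) →
    P (ModuleCat.of R (⨁ i, ↥(M i)))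

namespace HTCaux

variable {R}

lemma of_equiv (T : HereditaryTorsionClass R) {M N : Type u} [AddCommGroup M] [Module R M]
    [AddCommGroup N] [Module R N] (e : M ≃ₗ[R] N) (h : T.P (ModuleCat.of R M)) :
    T.P (ModuleCat.of R N) :=
  T.subobj (ModuleCat.of R M) (ModuleCat.of R N)
    (ModuleCat.ofHom e.symm.toLinearMap) e.symm.injective h

lemma mem_of_subsingleton (T : HereditaryTorsionClass R) (M : Type u) [AddCommGroup M]
    [Module R M] [Subsingleton M] : T.P (ModuleCat.of R M) := by
  have h0 := T.sums PEmpty.{u+1} (fun i => i.elim) (fun i => i.elim)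
  exact T.subobj _ (ModuleCat.of R M) (ModuleCat.ofHom 0)
    (fun a b _ => Subsingleton.elim (α := M) a b) h0

lemma quot_ideal (T : HereditaryTorsionClass R) {I J : Ideal R} (h : I ≤ J)
    (hI : T.P (ModuleCat.of R (R ⧸ I))) : T.P (ModuleCat.of R (R ⧸ J)) := by
  have hle : I ≤ (Submodule.comap LinearMap.id J) := by simpa using h
  have hsurj : Function.Surjective (Submodule.mapQ I J LinearMap.id hle) := by
    intro y
    obtain ⟨r, rfl⟩ := Submodule.mkQ_surjective J y
    exact ⟨I.mkQ r, by rw [Submodule.mkQ_apply, Submodule.mkQ_apply, Submodule.mapQ_apply,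
      LinearMap.id_apply]⟩
  exact T.quot _ _ (ModuleCat.ofHom (Submodule.mapQ I J LinearMap.id hle)) hsurj hI

lemma support_quotient_ideal (I : Ideal R) (p : PrimeSpectrum R) :
    p ∈ Module.support R (R ⧸ I) ↔ I ≤ p.asIdeal := by
  constructor
  · intro hp
    obtain ⟨m, hm⟩ := Module.mem_support_iff_exists_annihilator.mp hp
    obtain ⟨a, rfl⟩ := Submodule.mkQ_surjective I m
    intro r hr
    refine hm ?_
    rw [Submodule.mem_annihilator_span_singleton]
    rw [Submodule.mkQ_apply, ← Submodule.Quotient.mk_smul, Submodule.Quotient.mk_eq_zero]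
    rw [smul_eq_mul]
    exact I.mul_mem_right a hr
  · intro hle
    refine Module.mem_support_iff_exists_annihilator.mpr ⟨Submodule.Quotient.mk 1, ?_⟩
    intro r hr
    rw [Submodule.mem_annihilator_span_singleton, ← Submodule.Quotient.mk_smul,
      Submodule.Quotient.mk_eq_zero] at hr
    exact hle (by simpa using hr)

lemma support_subset (T : HereditaryTorsionClass R) {M : Type u} [AddCommGroup M] [Module R M]
    (h : T.P (ModuleCat.of R M)) :
    ∀ p ∈ Module.support R M, T.P (ModuleCat.of R (R ⧸ p.asIdeal)) := by
  intro p hp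
  obtain ⟨m, hm⟩ := Module.mem_support_iff_exists_annihilator.mp hp
  have h1 : T.P (ModuleCat.of R ↥(R ∙ m)) :=
    T.subobj (ModuleCat.of R M) _ (ModuleCat.ofHom (R ∙ m).subtype)
      (Submodule.injective_subtype _) h
  have h2 : T.P (ModuleCat.of R (R ⧸ Ideal.torsionOf R M m)) :=
    of_equiv T (Ideal.quotTorsionOfEquivSpanSingleton R M m).symm h1
  refine quot_ideal T (fun r hr => hm ?_) h2
  rwa [Submodule.mem_annihilator_span_singleton, ← Ideal.mem_torsionOf_iff]

lemma mem_of_finite (T : HereditaryTorsionClass R) [IsNoetherianRing R]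
    (M : Type u) [AddCommGroup M] [Module R M] [Module.Finite R M]
    (hsupp : ∀ p : PrimeSpectrum R, p ∈ Module.support R M →
      T.P (ModuleCat.of R (R ⧸ p.asIdeal))) :
    T.P (ModuleCat.of R M) := by
  obtain ⟨N, hN, hmax⟩ := set_has_maximal_iff_noetherian.mpr
    (isNoetherian_of_isNoetherianRing_of_finite R M)
    {N : Submodule R M | T.P (ModuleCat.of R ↥N)} ⟨⊥, mem_of_subsingleton T _⟩
  by_cases htop : N = ⊤
  · subst htop
    exact of_equiv T (Submodule.topEquiv) hN
  exfalso
  have hlt : N < ⊤ := lt_of_le_of_ne le_top htop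
  have : Nontrivial (M ⧸ N) := Submodule.Quotient.nontrivial_iff.mpr hlt.ne
  obtain ⟨p, hp⟩ := associatedPrimes.nonempty R (M ⧸ N)
  obtain ⟨hprime, x, hx⟩ := (isAssociatedPrime_iff).mp hp
  replace hx : p = (R ∙ x).annihilator := by
    rw [hx]; ext r
    rw [Submodule.mem_colon_singleton, Submodule.mem_annihilator_span_singleton, Submodule.mem_bot]
  have hxne : x ≠ 0 := by
    rintro rfl
    rw [Submodule.span_zero_singleton, Submodule.annihilator_bot] at hx
    exact hprime.ne_top hx
  have hpsupp : (⟨p, hprime⟩ : PrimeSpectrum R) ∈ Module.support R M :=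
    Module.support_subset_of_surjective N.mkQ (Submodule.mkQ_surjective N)
      (Module.mem_support_iff_exists_annihilator.mpr ⟨x, hx ▸ le_rfl⟩)
  have hRp : T.P (ModuleCat.of R (R ⧸ p)) := hsupp ⟨p, hprime⟩ hpsupp
  have htors : p = Ideal.torsionOf R (M ⧸ N) x := by
    ext r
    rw [Ideal.mem_torsionOf_iff, hx, Submodule.mem_annihilator_span_singleton]
  have hspan : T.P (ModuleCat.of R ↥(R ∙ x)) :=
    of_equiv T ((Submodule.quotEquivOfEq p _ htors).trans
      (Ideal.quotTorsionOfEquivSpanSingleton R (M ⧸ N) x)) hRp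
  set N' : Submodule R M := (R ∙ x).comap N.mkQ with hN'def
  have hNN' : N ≤ N' := by
    intro a ha
    simp only [hN'def, Submodule.mem_comap, Submodule.mkQ_apply]
    rw [Submodule.Quotient.mk_eq_zero N |>.mpr ha]
    exact Submodule.zero_mem _
  have hfinj : Function.Injective (Submodule.inclusion hNN') :=
    Submodule.inclusion_injective hNN'
  set g : ↥N' →ₗ[R] ↥(R ∙ x) :=
    LinearMap.codRestrict (R ∙ x) ((N.mkQ).comp N'.subtype) (fun z => z.2) with hgdef
  have hgsurj : Function.Surjective g := by
    rintro ⟨y, hy⟩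
    obtain ⟨a, rfl⟩ := Submodule.mkQ_surjective N y
    exact ⟨⟨a, hy⟩, rfl⟩
  have hrange : LinearMap.range (Submodule.inclusion hNN') = LinearMap.ker g := by
    ext z
    simp only [LinearMap.mem_range, LinearMap.mem_ker, hgdef]
    constructor
    · rintro ⟨a, rfl⟩
      apply Subtype.ext
      show N.mkQ ((Submodule.inclusion hNN' a : ↥N') : M) = 0
      rw [Submodule.coe_inclusion, Submodule.mkQ_apply, Submodule.Quotient.mk_eq_zero]
      exact a.2
    · intro hz
      have hz1 : (z : M) ∈ N := by
        rw [← Submodule.Quotient.mk_eq_zero N]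
        exact congrArg Subtype.val hz
      exact ⟨⟨z, hz1⟩, rfl⟩
  have hN'mem : T.P (ModuleCat.of R ↥N') :=
    T.ext (ModuleCat.of R ↥N') (ModuleCat.of R ↥N) (ModuleCat.of R ↥(R ∙ x))
      (ModuleCat.ofHom (Submodule.inclusion hNN')) (ModuleCat.ofHom g)
      hfinj hgsurj hrange hN hspan
  refine hmax N' hN'mem (lt_of_le_of_ne hNN' ?_)
  intro hEq
  obtain ⟨a, ha⟩ := Submodule.mkQ_surjective N x
  have haN' : a ∈ N' := by
    simp only [hN'def, Submodule.mem_comap, Submodule.mkQ_apply]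
    have ha' : Submodule.Quotient.mk a = x := ha
    rw [ha']
    exact Submodule.mem_span_singleton_self x
  rw [← hEq] at haN'
  exact hxne (by rw [← ha, Submodule.mkQ_apply, Submodule.Quotient.mk_eq_zero]; exact haN')

lemma mem_of_support_subset (T : HereditaryTorsionClass R) [IsNoetherianRing R]
    (M : Type u) [AddCommGroup M] [Module R M]
    (hsupp : ∀ p : PrimeSpectrum R, p ∈ Module.support R M →
      T.P (ModuleCat.of R (R ⧸ p.asIdeal))) :
    T.P (ModuleCat.of R M) := by
  have hx : ∀ x : M, T.P (ModuleCat.of R ↥(R ∙ x)) := by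
    intro x
    haveI : Module.Finite R ↥(R ∙ x) :=
      Module.Finite.iff_fg.mpr (Submodule.fg_span_singleton x)
    exact mem_of_finite T ↥(R ∙ x) (fun p hp => hsupp p
      (Module.support_subset_of_injective (R ∙ x).subtype (Submodule.injective_subtype _) hp))
  classical
  have hsum := T.sums M (fun x => ModuleCat.of R ↥(R ∙ x)) hx
  have hsurj : Function.Surjective (DirectSum.toModule R M M (fun x => (R ∙ x).subtype)) := by
    intro m
    refine ⟨DirectSum.lof R M (fun x => ↥(R ∙ x)) m ⟨m, Submodule.mem_span_singleton_self m⟩, ?_⟩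
    rw [DirectSum.toModule_lof]
    rfl
  exact T.quot _ (ModuleCat.of R M)
    (ModuleCat.ofHom (DirectSum.toModule R M M (fun x => (R ∙ x).subtype))) hsurj hsum

lemma support_dfinsupp {ι : Type u} (M : ι → Type u) [∀ i, AddCommGroup (M i)]
    [∀ i, Module R (M i)] :
    Module.support R (⨁ i, M i) ⊆ ⋃ i, Module.support R (M i) := by
  classical
  intro p hp
  by_contra hpU
  rw [Module.mem_support_iff'] at hp
  obtain ⟨m, hm⟩ := hp
  have hi : ∀ i, ∃ r, r ∉ p.asIdeal ∧ r • (m i) = 0 := by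
    intro i
    have hnot : p ∉ Module.support R (M i) := fun hmem => hpU (Set.mem_iUnion.mpr ⟨i, hmem⟩)
    obtain ⟨r, hr, hr0⟩ := Module.notMem_support_iff'.mp hnot (m i)
    exact ⟨r, hr, hr0⟩
  choose r hr hr0 using hi
  set s := DFinsupp.support m with hs
  refine hm (∏ i ∈ s, r i) (fun hmem => ?_) ?_
  · exact (Submonoid.prod_mem p.asIdeal.primeCompl (fun i _ => hr i)) hmem
  · refine DFinsupp.ext fun i => ?_
    rw [DFinsupp.smul_apply, DFinsupp.zero_apply]
    by_cases his : i ∈ s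
    · obtain ⟨d, hd⟩ := Finset.dvd_prod_of_mem r his
      rw [hd, mul_comm, mul_smul, hr0 i, smul_zero]
    · rw [DFinsupp.notMem_support_iff.mp his, smul_zero]

variable (R) in
/-- The torsion class attached to a set of primes. -/
def fwd (Z : Set (PrimeSpectrum R)) : HereditaryTorsionClass R where
  P M := Module.support R M ⊆ Z
  subobj M N f hf hM := (Module.support_subset_of_injective f.hom hf).trans hM
  quot M N f hf hM := (Module.support_subset_of_surjective f.hom hf).trans hM
  ext M N Q f g hf hg hfg hN hQ := by
    have hex := Module.support_of_exact (f := f.hom) (g := g.hom)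
      (LinearMap.exact_iff.mpr hfg.symm) hf hg
    show Module.support R ↑M ⊆ Z
    rw [hex]
    exact Set.union_subset hN hQ
  sums ι M hM := by
    show Module.support R (⨁ i, ↥(M i)) ⊆ Z
    exact (support_dfinsupp _).trans (Set.iUnion_subset fun i => hM i)

lemma htc_ext {T₁ T₂ : HereditaryTorsionClass R} (h : T₁.P = T₂.P) : T₁ = T₂ := by
  cases T₁; cases T₂
  simp only at h
  subst h
  rfl

end HTCaux

/-- Over a commutative Noetherian ring `R`, the assignment
`Z ↦ T_Z = {M : Supp M ⊆ Z}` is a bijection between the specialization-closed subsets of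
`Spec R` and the hereditary torsion classes in `R-Mod`, with inverse
`T ↦ {p : R/p ∈ T}`. -/
theorem stmt_3 [IsNoetherianRing R] :
    ∃ e : {Z : Set (PrimeSpectrum R) //
        ∀ p q : PrimeSpectrum R, p.asIdeal ≤ q.asIdeal → p ∈ Z → q ∈ Z} ≃
        HereditaryTorsionClass R,
      (∀ Z (M : ModuleCat.{u} R), (e Z).P M ↔ Module.support R M ⊆ Z.1) ∧
      (∀ (T : HereditaryTorsionClass R) (p : PrimeSpectrum R),
        p ∈ (e.symm T).1 ↔ T.P (ModuleCat.of R (R ⧸ p.asIdeal))) := by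
  refine ⟨⟨fun Z => HTCaux.fwd R Z.1,
    fun T => ⟨{p | T.P (ModuleCat.of R (R ⧸ p.asIdeal))},
      fun p q hpq hp => HTCaux.quot_ideal T hpq hp⟩, ?_, ?_⟩, ?_, ?_⟩
  · -- left inverse
    rintro ⟨Z, hZ⟩
    apply Subtype.ext
    ext p
    simp only [HTCaux.fwd, Set.mem_setOf_eq]
    constructor
    · intro h
      exact h ((HTCaux.support_quotient_ideal p.asIdeal p).mpr le_rfl)
    · intro hp q hq
      exact hZ p q ((HTCaux.support_quotient_ideal p.asIdeal q).mp hq) hp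
  · -- right inverse
    intro T
    apply HTCaux.htc_ext
    funext M
    apply propext
    constructor
    · intro h
      exact HTCaux.mem_of_support_subset T M (fun p hp => h hp)
    · intro h
      exact fun p hp => HTCaux.support_subset T h p hp
  · intro Z M
    exact Iff.rfl
  · intro T p
    exact Iff.rfl
end

section
/- Let R be a commutative Noetherian ring, Z a specialization-closed subset of Spec(R), and let G_Z denote the full subcategory of R-Mod consisting of Z-closed modules, i.e. modules Y with Hom_R(T,Y) = 0 = Ext^1_R(T,Y) for all T with Supp(T) ⊆ Z. Then G_Z is closed under arbitrary direct sums in R-Mod. -/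
open CategoryTheory DirectSum

universe u

variable (R : Type u) [CommRing R] (Z : Set (PrimeSpectrum R))

/-- An `R`-module `Y` is `Z`-closed when `Hom_R(T, Y) = 0 = Ext¹_R(T, Y)` for every module `T`
supported in `Z`. -/
def IsZClosed (Y : Type u) [AddCommGroup Y] [Module R Y] : Prop :=
  ∀ (T : Type u) [AddCommGroup T] [Module R T], Module.support R T ⊆ Z →
    (∀ f : T →ₗ[R] Y, f = 0) ∧
    Subsingleton (((Ext R (ModuleCat.{u} R) 1).obj
      (Opposite.op (ModuleCat.of R T))).obj (ModuleCat.of R Y))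

section Aux

open Opposite

noncomputable section

variable {R} {Z}


lemma subsingleton_iff_isZero (X : ModuleCat.{u} R) : Subsingleton X ↔ Limits.IsZero X := by
  constructor
  · intro h; exact ModuleCat.isZero_of_subsingleton X
  · intro h
    refine ⟨fun a b => ?_⟩
    have h0 : (𝟙 X : X ⟶ X) = 0 := h.eq_of_src _ _
    calc a = (𝟙 X : X ⟶ X) a := (ModuleCat.id_apply X a).symm
    _ = (0 : X ⟶ X) a := by rw [h0]
    _ = 0 := rfl
    _ = (0 : X ⟶ X) b := rfl
    _ = (𝟙 X : X ⟶ X) b := by rw [h0]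
    _ = b := ModuleCat.id_apply X b

lemma ext_one_subsingleton_iff (N Y : ModuleCat.{u} R) (P : ProjectiveResolution N) :
    Subsingleton (((Ext R (ModuleCat.{u} R) 1).obj (op N)).obj Y) ↔
      ∀ g : P.complex.X 1 ⟶ Y, P.complex.d 2 1 ≫ g = 0 →
        ∃ h : P.complex.X 0 ⟶ Y, P.complex.d 1 0 ≫ h = g := by
  have e : ((((Ext R (ModuleCat.{u} R) 1).obj (op N)).obj Y) : Type u) ≃
      ((P.complex.linearYonedaObj R Y).homology 1 : Type u) :=
    (P.isoExt 1 Y).toLinearEquiv.toEquiv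
  have h1 : Subsingleton (((Ext R (ModuleCat.{u} R) 1).obj (op N)).obj Y) ↔
      Subsingleton ((P.complex.linearYonedaObj R Y).homology 1) :=
    ⟨fun h => e.symm.subsingleton, fun h => e.subsingleton⟩
  rw [h1, subsingleton_iff_isZero, ← HomologicalComplex.exactAt_iff_isZero_homology,
    HomologicalComplex.exactAt_iff' _ 0 1 2 (by simp) (by simp),
    ShortComplex.moduleCat_exact_iff]
  constructor
  · intro H g hg
    obtain ⟨h, hh⟩ := H g (by
      show (P.complex.linearYonedaObj R Y).d 1 2 g = 0
      simp only [ChainComplex.linearYonedaObj_d]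
      exact hg)
    exact ⟨h, by exact hh⟩
  · intro H g hg
    obtain ⟨h, hh⟩ := H g (by exact hg)
    exact ⟨h, by exact hh⟩

lemma baer_of_ext_subsingleton (I : Ideal R) (W : Type u) [AddCommGroup W] [Module R W]
    (hext : Subsingleton (((Ext R (ModuleCat.{u} R) 1).obj
      (op (ModuleCat.of R (R ⧸ I)))).obj (ModuleCat.of R W)))
    (ψ : I →ₗ[R] W) : ∃ y : W, ∀ (r : R) (hr : r ∈ I), ψ ⟨r, hr⟩ = r • y := by
  classical
  set N : ModuleCat.{u} R := ModuleCat.of R (R ⧸ I) with hN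
  set Yc : ModuleCat.{u} R := ModuleCat.of R W with hYc
  let P := CategoryTheory.projectiveResolution N
  let mk : ModuleCat.of R R ⟶ N := ModuleCat.ofHom I.mkQ
  haveI : Epi mk := (ModuleCat.epi_iff_surjective _).mpr (Submodule.mkQ_surjective I)
  haveI : Projective (ModuleCat.of R R) :=
    ModuleCat.projective_of_free (Module.Basis.singleton PUnit.{u+1} R)
  let π0 : P.complex.X 0 ⟶ N := P.π.f 0
  haveI : Epi π0 := show Epi (P.π.f 0) from inferInstance
  let α : ModuleCat.of R R ⟶ P.complex.X 0 := Projective.factorThru mk π0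
  have hα : α ≫ π0 = mk := Projective.factorThru_comp mk π0
  let β : P.complex.X 0 ⟶ ModuleCat.of R R := Projective.factorThru π0 mk
  have hβ : β ≫ mk = π0 := Projective.factorThru_comp π0 mk
  let d1 : P.complex.X 1 ⟶ P.complex.X 0 := P.complex.d 1 0
  have hd1π : d1 ≫ π0 = 0 := P.complex_d_comp_π_f_zero
  have hβd : ∀ z : P.complex.X 1, β (d1 z) ∈ I := by
    intro z
    rw [← Submodule.Quotient.mk_eq_zero]
    have h1 : mk (β (d1 z)) = π0 (d1 z) := by
      have := ConcreteCategory.congr_hom hβ (d1 z); exact this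
    have h2 : π0 (d1 z) = 0 := ConcreteCategory.congr_hom hd1π z
    exact h1.trans h2
  let bd : P.complex.X 1 →ₗ[R] I := LinearMap.codRestrict I (LinearMap.comp β.hom d1.hom) hβd
  let g : P.complex.X 1 ⟶ Yc := ModuleCat.ofHom (ψ.comp bd)
  have hcycle : P.complex.d 2 1 ≫ g = 0 := by
    apply ModuleCat.hom_ext; apply LinearMap.ext; intro z
    have hz : d1 (P.complex.d 2 1 z) = 0 := by
      have : P.complex.d 2 1 ≫ d1 = 0 := P.complex.d_comp_d 2 1 0
      exact ConcreteCategory.congr_hom this z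
    show ψ (bd (P.complex.d 2 1 z)) = 0
    have : bd (P.complex.d 2 1 z) = 0 := by
      apply Subtype.ext
      show β (d1 (P.complex.d 2 1 z)) = 0
      rw [hz, map_zero]
    rw [this, map_zero]
  obtain ⟨h, hh⟩ := (ext_one_subsingleton_iff N Yc P).mp hext g hcycle
  let βl : (P.complex.X 0 : Type u) →ₗ[R] R := β.hom
  let αl : R →ₗ[R] (P.complex.X 0 : Type u) := α.hom
  have hγmem : ∀ r : R, r - βl (αl r) ∈ I := by
    intro r
    rw [← Submodule.Quotient.mk_eq_zero]
    have h1 : mk (β (α r)) = π0 (α r) := ConcreteCategory.congr_hom hβ (α r)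
    have h2 : π0 (α r) = mk r := ConcreteCategory.congr_hom hα r
    have : Submodule.Quotient.mk (p := I) (β (α r)) = Submodule.Quotient.mk r := h1.trans h2
    have : Submodule.Quotient.mk (p := I) (r - βl (αl r)) =
        Submodule.Quotient.mk r - Submodule.Quotient.mk (βl (αl r)) := by
      exact map_sub I.mkQ r (βl (αl r))
    rw [this]
    show Submodule.Quotient.mk r - Submodule.Quotient.mk (β (α r)) = 0
    rw [‹Submodule.Quotient.mk (β (α r)) = Submodule.Quotient.mk r›, sub_self]
  let γ : R →ₗ[R] I := LinearMap.codRestrict I (LinearMap.id - LinearMap.comp βl αl) hγmem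
  let hl : (P.complex.X 0 : Type u) →ₗ[R] W := h.hom
  let H : R →ₗ[R] W := LinearMap.comp hl αl + ψ.comp γ
  have key : ∀ (r : R) (hr : r ∈ I), H r = ψ ⟨r, hr⟩ := by
    intro r hr
    have hπα : π0 (α r) = 0 := by
      have h2 : π0 (α r) = mk r := ConcreteCategory.congr_hom hα r
      rw [h2]
      exact (Submodule.Quotient.mk_eq_zero I).mpr hr
    obtain ⟨z, hz⟩ := (ShortComplex.moduleCat_exact_iff _).mp P.exact₀ (α r) hπα
    have hz' : d1 z = αl r := hz
    have hβα : βl (αl r) ∈ I := by rw [← hz']; exact hβd z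
    have hhz : hl (αl r) = ψ ⟨βl (αl r), hβα⟩ := by
      calc hl (αl r) = hl (d1 z) := by rw [hz']
      _ = ψ ⟨β (d1 z), hβd z⟩ := (ConcreteCategory.congr_hom hh z).trans rfl
      _ = ψ ⟨βl (αl r), hβα⟩ := by
          congr 1
          exact Subtype.ext (congrArg βl hz')
    show hl (αl r) + ψ (γ r) = ψ ⟨r, hr⟩
    rw [hhz, ← map_add]
    congr 1
    apply Subtype.ext
    show βl (αl r) + (r - βl (αl r)) = r
    ring
  refine ⟨H 1, fun r hr => ?_⟩
  rw [← key r hr]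
  calc H r = H (r • (1 : R)) := by rw [smul_eq_mul, mul_one]
  _ = r • H 1 := map_smul H r 1


lemma extend_of_baerOn (Z : Set (PrimeSpectrum R)) {Y : Type u} [AddCommGroup Y] [Module R Y]
    (hY : ∀ I : Ideal R, Module.support R (R ⧸ I) ⊆ Z →
      ∀ φ : I →ₗ[R] Y, ∃ y : Y, ∀ (r : R) (hr : r ∈ I), φ ⟨r, hr⟩ = r • y)
    (F : Type u) [AddCommGroup F] [Module R F] (K : Submodule R F)
    (hK : Module.support R (F ⧸ K) ⊆ Z) (g : K →ₗ[R] Y) :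
    ∃ H : F →ₗ[R] Y, ∀ (x : F) (hx : x ∈ K), H x = g ⟨x, hx⟩ := by
  classical
  let g₀ : F →ₗ.[R] Y := ⟨K, g⟩
  set S : Set (F →ₗ.[R] Y) := {f | g₀ ≤ f} with hS
  obtain ⟨m, hg₀m, hmax⟩ := zorn_le_nonempty₀ S
    (fun c hcS hchain y hy => ⟨LinearPMap.sSup c (hchain.directedOn),
      le_trans (hcS hy) (LinearPMap.le_sSup hchain.directedOn hy),
      fun z hz => LinearPMap.le_sSup hchain.directedOn hz⟩) g₀ (show g₀ ≤ g₀ from le_rfl)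
  have hmS : g₀ ≤ m := hg₀m
  have hKA : K ≤ m.domain := hmS.1
  have htop : m.domain = ⊤ := by
    by_contra hne
    obtain ⟨x, hx⟩ : ∃ x : F, x ∉ m.domain := by
      by_contra hall
      push_neg at hall
      exact hne (Submodule.eq_top_iff'.mpr hall)
    set A := m.domain with hA
    -- support of F ⧸ A
    have hFA : Module.support R (F ⧸ A) ⊆ Z := by
      refine subset_trans (Module.support_subset_of_surjective
        (Submodule.mapQ K A LinearMap.id hKA) ?_) hK
      intro z
      obtain ⟨w, rfl⟩ := Submodule.Quotient.mk_surjective A z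
      exact ⟨Submodule.Quotient.mk w, by rw [Submodule.mapQ_apply]; rfl⟩
    set I : Ideal R := A.comap (LinearMap.toSpanSingleton R F x) with hI
    have hmemI : ∀ r : R, r ∈ I ↔ r • x ∈ A := by
      intro r
      rw [hI, Submodule.mem_comap, LinearMap.toSpanSingleton_apply]
    have hQI : Module.support R (R ⧸ I) ⊆ Z := by
      have hker : I ≤ LinearMap.ker (A.mkQ ∘ₗ LinearMap.toSpanSingleton R F x) := by
        intro r hr
        simp only [LinearMap.mem_ker, LinearMap.comp_apply, LinearMap.toSpanSingleton_apply]
        exact (Submodule.Quotient.mk_eq_zero A).mpr ((hmemI r).mp hr)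
      have hker' : LinearMap.ker (A.mkQ ∘ₗ LinearMap.toSpanSingleton R F x) ≤ I := by
        intro r hr
        simp only [LinearMap.mem_ker, LinearMap.comp_apply, LinearMap.toSpanSingleton_apply] at hr
        exact (hmemI r).mpr ((Submodule.Quotient.mk_eq_zero A).mp hr)
      have hinj : Function.Injective
          (Submodule.liftQ I (A.mkQ ∘ₗ LinearMap.toSpanSingleton R F x) hker) := by
        rw [← LinearMap.ker_eq_bot, Submodule.ker_liftQ_eq_bot I _ hker hker']
      exact subset_trans (Module.support_subset_of_injective _ hinj) hFA
    let ρ : I →ₗ[R] A := (LinearMap.toSpanSingleton R F x).restrict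
      (fun r (hr : r ∈ I) => (hmemI r).mp hr)
    obtain ⟨y, hy⟩ := hY I hQI (m.toFun ∘ₗ ρ)
    -- build the one-step extension
    let θ : (A × R) →ₗ[R] F := A.subtype ∘ₗ LinearMap.fst R A R
      + LinearMap.toSpanSingleton R F x ∘ₗ LinearMap.snd R A R
    have hθ : ∀ v : A × R, θ v = (v.1 : F) + v.2 • x := fun v => rfl
    let ψ : (A × R) →ₗ[R] Y := m.toFun ∘ₗ LinearMap.fst R A R
      + LinearMap.toSpanSingleton R Y y ∘ₗ LinearMap.snd R A R
    have hψ : ∀ v : A × R, ψ v = m.toFun v.1 + v.2 • y := fun v => rfl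
    have hker : LinearMap.ker θ ≤ LinearMap.ker ψ := by
      rintro ⟨a, r⟩ hv
      rw [LinearMap.mem_ker, hθ] at hv
      have hrx : r • x = -(a : F) := by
        have := hv
        abel_nf at this ⊢
        linear_combination (norm := abel) this
      have hrI : r ∈ I := (hmemI r).mpr (by rw [hrx]; exact A.neg_mem a.2)
      rw [LinearMap.mem_ker, hψ]
      have h1 : r • y = m.toFun (ρ ⟨r, hrI⟩) := (hy r hrI).symm
      have h2 : ρ ⟨r, hrI⟩ = (⟨r • x, (hmemI r).mp hrI⟩ : A) := rfl
      rw [h1, h2, ← map_add]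
      have h3 : (a + ⟨r • x, (hmemI r).mp hrI⟩ : A) = 0 := by
        apply Subtype.ext
        show (a : F) + r • x = 0
        exact hv
      rw [h3, map_zero]
    let q1 := Submodule.liftQ (LinearMap.ker θ) ψ hker
    let e := LinearMap.quotKerEquivRange θ
    let h1 : (LinearMap.range θ) →ₗ[R] Y := q1 ∘ₗ (e.symm : _ ≃ₗ[R] _)
    have h1spec : ∀ v : A × R, h1 ⟨θ v, LinearMap.mem_range_self θ v⟩ = ψ v := by
      intro v
      have he : e (Submodule.Quotient.mk v) = ⟨θ v, LinearMap.mem_range_self θ v⟩ :=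
        Subtype.ext (LinearMap.quotKerEquivRange_apply_mk θ v)
      have : e.symm ⟨θ v, LinearMap.mem_range_self θ v⟩ = Submodule.Quotient.mk v := by
        rw [← he, LinearEquiv.symm_apply_apply]
      show q1 (e.symm ⟨θ v, LinearMap.mem_range_self θ v⟩) = ψ v
      rw [this]
      exact Submodule.liftQ_apply _ ψ v
    let m' : F →ₗ.[R] Y := ⟨LinearMap.range θ, h1⟩
    have hle : m ≤ m' := by
      constructor
      · intro a ha
        exact ⟨(⟨a, ha⟩, 0), by rw [hθ]; simp⟩
      · rintro a b hab
        have hb : b = ⟨θ (a, 0), LinearMap.mem_range_self θ _⟩ :=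
          Subtype.ext (show (b : F) = θ (a, 0) by rw [hθ]; simpa using hab.symm)
        calc m.toFun a = ψ (a, 0) := by rw [hψ]; simp
        _ = h1 ⟨θ (a, 0), LinearMap.mem_range_self θ _⟩ := (h1spec (a, 0)).symm
        _ = m'.toFun b := by rw [hb]
    have hm' : m' ∈ S := le_trans hmS hle
    have heq : m' = m := le_antisymm (hmax.2 hm' hle) hle
    apply hx
    have hxm' : x ∈ m'.domain := ⟨(0, 1), by rw [hθ]; simp⟩
    rw [heq] at hxm'
    exact hxm'
  have hall : ∀ z : F, z ∈ m.domain := Submodule.eq_top_iff'.mp htop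
  refine ⟨m.toFun ∘ₗ LinearMap.codRestrict m.domain LinearMap.id hall, fun k hk => ?_⟩
  show m.toFun ⟨k, hall k⟩ = g ⟨k, hk⟩
  exact (hmS.2 (x := ⟨k, hk⟩) (y := ⟨k, hall k⟩) rfl).symm


lemma directSum_ideal_extend [IsNoetherianRing R] {ι : Type u} (M : ι → Type u)
    [∀ i, AddCommGroup (M i)] [∀ i, Module R (M i)] (I : Ideal R)
    (hsub : ∀ i, ∀ φi : I →ₗ[R] M i, ∃ y : M i, ∀ (r : R) (hr : r ∈ I), φi ⟨r, hr⟩ = r • y)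
    (φ : I →ₗ[R] ⨁ i, M i) :
    ∃ y : ⨁ i, M i, ∀ (r : R) (hr : r ∈ I), φ ⟨r, hr⟩ = r • y := by
  classical
  obtain ⟨s, hs⟩ := (IsNoetherian.noetherian I : I.FG)
  have hmem : ∀ a ∈ s, a ∈ I := fun a ha => hs ▸ Ideal.subset_span ha
  let S : Finset ι := s.attach.biUnion
    (fun a => (φ ⟨a.1, hmem a.1 a.2⟩).support)
  have hsupp : ∀ (r : R) (hr : r ∈ I), ∀ i ∉ S, φ ⟨r, hr⟩ i = 0 := by
    have key : ∀ r ∈ Ideal.span (↑s : Set R), ∀ (hr : r ∈ I), ∀ i ∉ S, φ ⟨r, hr⟩ i = 0 := by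
      intro r hrs
      refine Submodule.span_induction ?_ ?_ ?_ ?_ hrs
      · intro a ha hr i hi
        by_contra hne
        exact hi (Finset.mem_biUnion.mpr ⟨⟨a, Finset.mem_coe.mp ha⟩, Finset.mem_attach _ _,
          DFinsupp.mem_support_iff.mpr hne⟩)
      · intro hr i hi
        have h0 : (⟨(0:R), hr⟩ : I) = 0 := rfl
        rw [h0, map_zero]; rfl
      · intro z w hz hw ihz ihw hr i hi
        have hzI : z ∈ I := hs ▸ hz
        have hwI : w ∈ I := hs ▸ hw
        have hadd : (⟨z + w, hr⟩ : I) = ⟨z, hzI⟩ + ⟨w, hwI⟩ := rfl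
        rw [hadd, map_add, DFinsupp.add_apply, ihz hzI i hi, ihw hwI i hi, add_zero]
      · intro c z hz ihz hr i hi
        have hzI : z ∈ I := hs ▸ hz
        have hsmul : (⟨c • z, hr⟩ : I) = c • ⟨z, hzI⟩ := rfl
        rw [hsmul, map_smul, DFinsupp.smul_apply, ihz hzI i hi, smul_zero]
    intro r hr
    exact key r (show r ∈ Submodule.span R (↑s : Set R) by rw [hs]; exact hr) hr
  choose yfun hyfun using fun i => hsub i ((DirectSum.component R ι M i).comp φ)
  refine ⟨∑ i ∈ S, DirectSum.lof R ι M i (yfun i), fun r hr => ?_⟩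
  apply DFinsupp.ext
  intro i
  have hcomp : φ ⟨r, hr⟩ i = r • yfun i := hyfun i r hr
  have hsum : (∑ j ∈ S, DirectSum.lof R ι M j (yfun j)) i
      = if i ∈ S then yfun i else 0 := by
    rw [DFinsupp.finset_sum_apply]
    by_cases hiS : i ∈ S
    · rw [if_pos hiS]
      rw [Finset.sum_eq_single_of_mem i hiS]
      · rw [DirectSum.lof_eq_of, DirectSum.of_eq_same]
      · intro j hj hji
        rw [DirectSum.lof_eq_of, DirectSum.of_eq_of_ne _ _ _ hji.symm]
    · rw [if_neg hiS]
      refine Finset.sum_eq_zero fun j hj => ?_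
      rw [DirectSum.lof_eq_of, DirectSum.of_eq_of_ne _ _ _ (fun h => hiS (by rw [h]; exact hj))]
  rw [DFinsupp.smul_apply, hsum]
  by_cases hiS : i ∈ S
  · rw [if_pos hiS]; exact hcomp
  · rw [if_neg hiS, smul_zero]
    exact hsupp r hr i hiS

end
end Aux

/-- Over a commutative Noetherian ring `R`, the Giraud subcategory `G_Z` of
`Z`-closed modules is closed under arbitrary direct sums. -/
theorem stmt_11 [IsNoetherianRing R]
    (hZ : ∀ p q : PrimeSpectrum R, p.asIdeal ≤ q.asIdeal → p ∈ Z → q ∈ Z)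
    (ι : Type u) (M : ι → Type u) [∀ i, AddCommGroup (M i)] [∀ i, Module R (M i)]
    (hM : ∀ i, IsZClosed R Z (M i)) :
    IsZClosed R Z (⨁ i, M i) := by
  classical
  intro T _ _ hT
  constructor
  · -- the Hom part
    intro f
    apply LinearMap.ext; intro t
    apply DFinsupp.ext; intro i
    have hcomp : (DirectSum.component R ι M i).comp f = 0 :=
      (hM i T hT).1 ((DirectSum.component R ι M i).comp f)
    have : (DirectSum.component R ι M i) (f t) = 0 := LinearMap.congr_fun hcomp t
    exact this
  · -- the Ext part
    have hBaer : ∀ I : Ideal R, Module.support R (R ⧸ I) ⊆ Z →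
        ∀ φ : I →ₗ[R] ⨁ i, M i, ∃ y : ⨁ i, M i,
          ∀ (r : R) (hr : r ∈ I), φ ⟨r, hr⟩ = r • y := by
      intro I hI φ
      exact directSum_ideal_extend M I
        (fun i φi => baer_of_ext_subsingleton I (M i) ((hM i (R ⧸ I) hI).2) φi) φ
    let Tc : ModuleCat.{u} R := ModuleCat.of R T
    let Yc : ModuleCat.{u} R := ModuleCat.of R (⨁ i, M i)
    let P := CategoryTheory.projectiveResolution Tc
    rw [ext_one_subsingleton_iff Tc Yc P]
    intro g hg
    let d1l : (P.complex.X 1 : Type u) →ₗ[R] (P.complex.X 0 : Type u) := (P.complex.d 1 0).hom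
    let π0l : (P.complex.X 0 : Type u) →ₗ[R] T := (P.π.f 0).hom
    let gl : (P.complex.X 1 : Type u) →ₗ[R] ⨁ i, M i := g.hom
    let K : Submodule R (P.complex.X 0 : Type u) := LinearMap.range d1l
    have hexact0 : ∀ v : (P.complex.X 0 : Type u), π0l v = 0 → ∃ z, d1l z = v :=
      fun v hv => (ShortComplex.moduleCat_exact_iff _).mp P.exact₀ v hv
    have hKker : K = LinearMap.ker π0l := by
      ext v
      constructor
      · rintro ⟨z, rfl⟩
        exact ConcreteCategory.congr_hom P.complex_d_comp_π_f_zero z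
      · intro hv
        exact hexact0 v hv
    have hπsurj : Function.Surjective π0l :=
      (ModuleCat.epi_iff_surjective (P.π.f 0)).mp inferInstance
    have hK : Module.support R ((P.complex.X 0 : Type u) ⧸ K) ⊆ Z := by
      rw [hKker]
      rw [(π0l.quotKerEquivOfSurjective hπsurj).support_eq]
      exact hT
    have hkerg : LinearMap.ker d1l ≤ LinearMap.ker gl := by
      intro z hz
      obtain ⟨w, hw⟩ := (ShortComplex.moduleCat_exact_iff _).mp (P.exact_succ 0) z hz
      have hw' : P.complex.d 2 1 w = z := hw
      rw [LinearMap.mem_ker, ← hw']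
      exact ConcreteCategory.congr_hom hg w
    let gbar : K →ₗ[R] ⨁ i, M i :=
      (Submodule.liftQ _ gl hkerg) ∘ₗ (d1l.quotKerEquivRange.symm : _ ≃ₗ[R] _)
    obtain ⟨H, hH⟩ := extend_of_baerOn Z hBaer (P.complex.X 0 : Type u) K hK gbar
    refine ⟨ModuleCat.ofHom H, ?_⟩
    apply ModuleCat.hom_ext; apply LinearMap.ext; intro z
    have hmem : d1l z ∈ K := LinearMap.mem_range_self d1l z
    have step1 : H (d1l z) = gbar ⟨d1l z, hmem⟩ := hH (d1l z) hmem
    have he : d1l.quotKerEquivRange (Submodule.Quotient.mk z) = ⟨d1l z, hmem⟩ :=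
      Subtype.ext (LinearMap.quotKerEquivRange_apply_mk d1l z)
    have step2 : gbar ⟨d1l z, hmem⟩ = gl z := by
      show (Submodule.liftQ _ gl hkerg) (d1l.quotKerEquivRange.symm ⟨d1l z, hmem⟩) = gl z
      rw [← he, LinearEquiv.symm_apply_apply, Submodule.liftQ_apply]
    show H (d1l z) = gl z
    rw [step1, step2]
end

section
/- Let R be a commutative reduced Noetherian ring with minimal primes p₁, ..., pₙ, and let S be the set of non-zerodivisors of R. Then the total ring of fractions S⁻¹R is isomorphic as a ring to the product of the residue fields k(p₁) × ... × k(pₙ). -/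
universe u

section Aux

variable {R : Type u} [CommRing R]

lemma aux_sInf_minimalPrimes [IsReduced R] : sInf (minimalPrimes R) = ⊥ := by
  have h : sInf ((⊥ : Ideal R).minimalPrimes) = (⊥ : Ideal R).radical :=
    Ideal.sInf_minimalPrimes
  have h2 : (⊥ : Ideal R).radical = ⊥ := by
    have := nilradical_eq_zero R
    simpa [nilradical] using this
  rw [show minimalPrimes R = (⊥ : Ideal R).minimalPrimes from rfl, h, h2]

/-- In a reduced Noetherian ring, every minimal prime consists of zerodivisors, i.e. is
disjoint from the set of non-zerodivisors. -/
lemma aux_disjoint [IsReduced R] [IsNoetherianRing R] {p : Ideal R}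
    (hp : p ∈ minimalPrimes R) : Disjoint (nonZeroDivisors R : Set R) (p : Set R) := by
  classical
  have hfin := minimalPrimes.finite_of_isNoetherianRing R
  rw [Set.disjoint_right]
  intro x hxp hxS
  -- choose, for each minimal prime `q ≠ p`, an element of `q \ p`
  have hchoice : ∀ q ∈ hfin.toFinset.erase p, ∃ y, y ∈ q ∧ y ∉ p := by
    intro q hq
    rw [Finset.mem_erase, Set.Finite.mem_toFinset] at hq
    by_contra hcon
    push_neg at hcon
    have hqle : q ≤ p := fun y hy => by
      by_contra hyp; exact hyp (hcon y hy)
    have := hp.2 ⟨hq.2.1.1, bot_le⟩ hqle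
    exact hq.1 (le_antisymm hqle this)
  set g : Ideal R → R := fun q => if h : ∃ y, y ∈ q ∧ y ∉ p then h.choose else 1 with hg
  have hgmem : ∀ q ∈ hfin.toFinset.erase p, g q ∈ q ∧ g q ∉ p := by
    intro q hq
    have h := hchoice q hq
    simp only [hg, dif_pos h]
    exact h.choose_spec
  set y : R := ∏ q ∈ hfin.toFinset.erase p, g q with hy
  have hpP : p.IsPrime := hp.1.1
  have hynp : y ∉ p := by
    rw [hy, Ideal.IsPrime.prod_mem_iff]
    rintro ⟨q, hq, hgq⟩
    exact (hgmem q hq).2 hgq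
  have hxy : x * y ∈ sInf (minimalPrimes R) := by
    rw [Ideal.mem_sInf]
    intro q hq
    by_cases hqp : q = p
    · subst hqp; exact q.mul_mem_right _ hxp
    · have hq' : q ∈ hfin.toFinset.erase p := by
        rw [Finset.mem_erase, Set.Finite.mem_toFinset]; exact ⟨hqp, hq⟩
      have : g q ∣ y := Finset.dvd_prod_of_mem _ hq'
      obtain ⟨c, hc⟩ := this
      rw [hc, ← mul_assoc]
      exact Ideal.mul_mem_right _ _ (Ideal.mul_mem_left _ _ ((hgmem q hq').1))
  rw [aux_sInf_minimalPrimes, Ideal.mem_bot] at hxy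
  have hy0 : y ≠ 0 := fun h => hynp (h ▸ p.zero_mem)
  exact hy0 (mem_nonZeroDivisors_iff_right.mp hxS y (by rwa [mul_comm] at hxy))

/-- In a reduced Noetherian ring, any prime disjoint from the non-zerodivisors is a minimal
prime. -/
lemma aux_minimal_of_disjoint [IsReduced R] [IsNoetherianRing R] {P : Ideal R}
    (hP : P.IsPrime) (hd : Disjoint (nonZeroDivisors R : Set R) (P : Set R)) :
    P ∈ minimalPrimes R := by
  classical
  have hfin := minimalPrimes.finite_of_isNoetherianRing R
  -- every element of P is a zerodivisor, hence lies in some minimal prime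
  have hsub : (P : Set R) ⊆ ⋃ q ∈ hfin.toFinset, ((q : Ideal R) : Set R) := by
    intro x hx
    have hxS : x ∉ nonZeroDivisors R := fun hxS => Set.disjoint_left.mp hd hxS hx
    rw [mem_nonZeroDivisors_iff_right] at hxS
    push_neg at hxS
    obtain ⟨z, hz1, hz2⟩ := hxS
    have : z ∉ sInf (minimalPrimes R) := by
      rw [aux_sInf_minimalPrimes, Ideal.mem_bot]; exact hz2
    rw [Ideal.mem_sInf] at this
    push_neg at this
    obtain ⟨q, hq, hzq⟩ := this
    have hxq : x ∈ q := by
      have : z * x ∈ q := hz1 ▸ q.zero_mem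
      rcases hq.1.1.mem_or_mem this with h | h
      · exact absurd h hzq
      · exact h
    exact Set.mem_biUnion (hfin.mem_toFinset.mpr hq) hxq
  have := (Ideal.subset_union_prime (s := hfin.toFinset) (f := id) ⊥ ⊥
    (fun i hi _ _ => (hfin.mem_toFinset.mp hi).1.1) (I := P)).mp (by simpa using hsub)
  obtain ⟨q, hq, hPq⟩ := this
  rw [Set.Finite.mem_toFinset] at hq
  -- P is between some minimal prime and q, forcing equality
  obtain ⟨p', hp', hp'P⟩ := Ideal.exists_minimalPrimes_le (I := (⊥ : Ideal R)) (J := P) bot_le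
  have hqp' : q ≤ p' := hq.2 ⟨hp'.1.1, bot_le⟩ (hp'P.trans hPq)
  have : P = q := le_antisymm hPq (hqp'.trans hp'P)
  exact this ▸ hq

/-- The quotient of the total fraction ring by a localized prime (assumed maximal) is the
fraction field of the corresponding quotient domain. -/
lemma aux_factor (p : Ideal R) (hpP : p.IsPrime)
    (hd : Disjoint ((nonZeroDivisors R) : Set R) (p : Set R))
    (hmax : (p.map (algebraMap R (Localization (nonZeroDivisors R)))).IsMaximal) :
    Nonempty ((Localization (nonZeroDivisors R) ⧸
      p.map (algebraMap R (Localization (nonZeroDivisors R)))) ≃+* FractionRing (R ⧸ p)) := by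
  set Q := Localization (nonZeroDivisors R)
  set q : Ideal Q := p.map (algebraMap R Q) with hqdef
  haveI : p.IsPrime := hpP
  have hcomap : q.comap (algebraMap R Q) = p :=
    IsLocalization.comap_map_of_isPrime_disjoint (nonZeroDivisors R) Q hpP hd
  have hle : p ≤ q.comap (algebraMap R Q) := hcomap.ge
  set D := R ⧸ p with hD
  set F := Q ⧸ q with hF
  set φ : D →+* F := Ideal.quotientMap q (algebraMap R Q) hle with hφ
  have hφmk : ∀ r : R, φ (Ideal.Quotient.mk _ r) =
      Ideal.Quotient.mk q (algebraMap R Q r) := fun r => Ideal.quotientMap_mk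
  have hφinj : Function.Injective φ := by
    rw [RingHom.injective_iff_ker_eq_bot, eq_bot_iff]
    intro d hd'
    obtain ⟨r, rfl⟩ := Ideal.Quotient.mk_surjective d
    rw [RingHom.mem_ker, hφmk, Ideal.Quotient.eq_zero_iff_mem] at hd'
    have : r ∈ q.comap (algebraMap R Q) := hd'
    rw [hcomap] at this
    rw [Ideal.mem_bot, Ideal.Quotient.eq_zero_iff_mem]
    exact this
  letI : Algebra D F := φ.toAlgebra
  have halg : (algebraMap D F) = φ := rfl
  have hFfield : IsField F :=
    (Ideal.Quotient.maximal_ideal_iff_isField_quotient q).mp hmax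
  haveI : IsDomain D := Ideal.Quotient.isDomain _
  haveI : IsLocalization (nonZeroDivisors D) F := by
    constructor; constructor
    · rintro ⟨y, hy⟩
      have hy0 : y ≠ 0 := nonZeroDivisors.ne_zero hy
      have hφy : φ y ≠ 0 := fun h => hy0 (hφinj (h.trans (map_zero φ).symm))
      obtain ⟨z, hz⟩ := hFfield.mul_inv_cancel hφy
      exact IsUnit.of_mul_eq_one z (by rwa [halg])
    · intro z
      obtain ⟨x, rfl⟩ := Ideal.Quotient.mk_surjective z
      obtain ⟨⟨r, s⟩, hrs⟩ := IsLocalization.mk'_surjective (nonZeroDivisors R) x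
      have hspec : x * algebraMap R Q (s : R) = algebraMap R Q r := by
        rw [← hrs]; exact IsLocalization.mk'_spec Q r s
      have hsD : (Ideal.Quotient.mk p (s : R)) ∈ nonZeroDivisors D := by
        refine mem_nonZeroDivisors_of_ne_zero ?_
        rw [Ne, Ideal.Quotient.eq_zero_iff_mem]
        exact fun h => Set.disjoint_left.mp hd s.2 h
      refine ⟨⟨Ideal.Quotient.mk _ r, ⟨Ideal.Quotient.mk _ (s : R), hsD⟩⟩, ?_⟩
      simp only [halg, hφmk]
      rw [← map_mul, hspec]
    · intro a b hab
      rw [halg] at hab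
      exact ⟨1, by rw [hφinj hab]⟩
  exact ⟨(IsLocalization.algEquiv (nonZeroDivisors D) F (FractionRing D)).toRingEquiv⟩

end Aux

set_option maxHeartbeats 1000000 in
set_option synthInstance.maxHeartbeats 100000 in
/-- Let `R` be a commutative reduced Noetherian ring with minimal primes
`p₁, ..., pₙ`, and `S` its set of non-zerodivisors. Then the total ring of fractions `S⁻¹R` is
isomorphic as a ring to the product of the residue fields `k(p₁) × ... × k(pₙ)` (here `k(p)`
is realized as the fraction field of `R/p`). -/
theorem stmt_17 (R : Type u) [CommRing R] [IsReduced R] [IsNoetherianRing R] :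
    Nonempty (Localization (nonZeroDivisors R) ≃+*
      ∀ p : minimalPrimes R, FractionRing (R ⧸ (p : Ideal R))) := by
  classical
  haveI : Finite (minimalPrimes R) := (minimalPrimes.finite_of_isNoetherianRing R).to_subtype
  -- the localized minimal primes
  set q : minimalPrimes R → Ideal (Localization (nonZeroDivisors R)) :=
    fun p => Ideal.map (algebraMap R (Localization (nonZeroDivisors R))) (p : Ideal R) with hq
  have hdisj : ∀ p : minimalPrimes R,
      Disjoint ((nonZeroDivisors R : Submonoid R) : Set R) ((p : Ideal R) : Set R) :=
    fun p => aux_disjoint p.2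
  have hqprime : ∀ p : minimalPrimes R, (q p).IsPrime := fun p =>
    IsLocalization.isPrime_of_isPrime_disjoint (nonZeroDivisors R) _ _ p.2.1.1 (hdisj p)
  have hcomap : ∀ p : minimalPrimes R,
      (q p).comap (algebraMap R (Localization (nonZeroDivisors R))) = (p : Ideal R) :=
    fun p => IsLocalization.comap_map_of_isPrime_disjoint
      (nonZeroDivisors R) _ p.2.1.1 (hdisj p)
  -- each localized minimal prime is maximal
  have hqmax : ∀ p : minimalPrimes R, (q p).IsMaximal := by
    intro p
    haveI := hqprime p
    refine ⟨(hqprime p).1, fun J hJ => ?_⟩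
    by_contra hJtop
    obtain ⟨m, hm, hJm⟩ := Ideal.exists_le_maximal J hJtop
    have hmP : m.IsPrime := hm.isPrime
    have hm' := (IsLocalization.isPrime_iff_isPrime_disjoint (nonZeroDivisors R) _ m).mp hmP
    have hmm : m.comap (algebraMap R (Localization (nonZeroDivisors R))) ∈ minimalPrimes R :=
      aux_minimal_of_disjoint hm'.1 hm'.2
    have hle : (p : Ideal R) ≤ m.comap (algebraMap R (Localization (nonZeroDivisors R))) := by
      rw [← hcomap p]
      exact Ideal.comap_mono (le_of_lt (lt_of_lt_of_le hJ hJm))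
    have hge : m.comap (algebraMap R (Localization (nonZeroDivisors R))) ≤ (p : Ideal R) :=
      hmm.2 ⟨p.2.1.1, bot_le⟩ hle
    have heq : (p : Ideal R) = m.comap (algebraMap R (Localization (nonZeroDivisors R))) :=
      le_antisymm hle hge
    have hqm : q p = m := by
      rw [hq]
      simp only
      rw [heq, IsLocalization.map_comap (nonZeroDivisors R)]
    exact (lt_of_lt_of_le hJ hJm).ne' hqm.symm
  -- the intersection of the localized minimal primes is zero
  have hinf : (⨅ p : minimalPrimes R, q p) = ⊥ := by
    rw [eq_bot_iff]
    intro x hx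
    obtain ⟨⟨r, s⟩, hrs⟩ := IsLocalization.mk'_surjective (nonZeroDivisors R) x
    have hspec : x * algebraMap R (Localization (nonZeroDivisors R)) (s : R) =
        algebraMap R (Localization (nonZeroDivisors R)) r := by
      rw [← hrs]; exact IsLocalization.mk'_spec _ r s
    rw [Ideal.mem_iInf] at hx
    have hr : r ∈ sInf (minimalPrimes R) := by
      rw [Ideal.mem_sInf]
      intro p hp
      have h1 : algebraMap R (Localization (nonZeroDivisors R)) r ∈ q ⟨p, hp⟩ := by
        rw [← hspec]; exact Ideal.mul_mem_right _ _ (hx ⟨p, hp⟩)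
      have h2 := Ideal.mem_comap.mpr h1
      rwa [hcomap ⟨p, hp⟩] at h2
    rw [aux_sInf_minimalPrimes, Ideal.mem_bot] at hr
    subst hr
    rw [map_zero] at hspec
    have hs : IsUnit (algebraMap R (Localization (nonZeroDivisors R)) (s : R)) :=
      IsLocalization.map_units _ s
    rw [Ideal.mem_bot]
    exact (hs.mul_left_eq_zero.mp hspec)
  -- pairwise coprimality
  have hcop : Pairwise (Function.onFun IsCoprime q) := by
    intro p₁ p₂ hne
    rw [Function.onFun, Ideal.isCoprime_iff_sup_eq]
    refine (hqmax p₁).coprime_of_ne (hqmax p₂) ?_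
    intro h
    apply hne
    have h2 := congrArg (Ideal.comap (algebraMap R (Localization (nonZeroDivisors R)))) h
    rw [hcomap p₁, hcomap p₂] at h2
    exact Subtype.ext h2
  -- Chinese remainder theorem
  have e₁ : Localization (nonZeroDivisors R) ≃+*
      Localization (nonZeroDivisors R) ⧸ (⊥ : Ideal (Localization (nonZeroDivisors R))) :=
    (RingEquiv.quotientBot _).symm
  have e₂ : (Localization (nonZeroDivisors R) ⧸ (⊥ : Ideal (Localization (nonZeroDivisors R))))
      ≃+* Localization (nonZeroDivisors R) ⧸ (⨅ p : minimalPrimes R, q p) :=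
    Ideal.quotEquivOfEq hinf.symm
  have e₃ : (Localization (nonZeroDivisors R) ⧸ ⨅ p : minimalPrimes R, q p) ≃+*
      ∀ p : minimalPrimes R, Localization (nonZeroDivisors R) ⧸ q p :=
    Ideal.quotientInfRingEquivPiQuotient q hcop
  -- identify each factor with the fraction field of `R ⧸ p`
  have e₄ : ∀ p : minimalPrimes R,
      Nonempty ((Localization (nonZeroDivisors R) ⧸ q p) ≃+*
        FractionRing (R ⧸ (p : Ideal R))) :=
    fun p => aux_factor (p : Ideal R) p.2.1.1 (hdisj p) (hqmax p)
  have e₄' := fun p => Classical.choice (e₄ p)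
  exact ⟨e₁.trans (e₂.trans (e₃.trans (RingEquiv.piCongrRight e₄')))⟩
end
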